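/- arXiv:2501.10538 — 5 statements merged into one kernel-verified Lean document; each statement's English description precedes it below -/
import Mathlib

section
/- Let $\boldsymbol{w}, \boldsymbol{\mu} \in \mathbb{R}^p$ with $\langle \boldsymbol{w}, \boldsymbol{\mu}\rangle > 0$. In the noisy mixture model with noise rate $\eta \in [0,1/2)$, the misclassification probability satisfies $\mathbb{P}(\langle \boldsymbol{w}, y_{\mathrm{N}}\boldsymbol{x}\rangle < 0) \le \eta + \frac{1-\eta}{2}\|\mathbb{E}[\boldsymbol{z}\boldsymbol{z}^\top]\| \left(\frac{\|\boldsymbol{w}\|}{\langle \boldsymbol{w}, \boldsymbol{\mu}\rangle}\right)^2$, where $\|\cdot\|$ denotes the spectral norm. -/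
open MeasureTheory ProbabilityTheory Matrix
open scoped Matrix.Norms.L2Operator RealInnerProductSpace
open scoped ENNReal

/-- Noisy mixture model test error bound:
`P(⟨w, y_N • x⟩ < 0) ≤ η + (1-η)/2 ‖E[zzᵀ]‖ (‖w‖/⟨w,μ⟩)²`, where `‖·‖` on the
matrix `E[zzᵀ]` is the spectral (ℓ²-operator) norm.  The noisy label is
`y_N = ε * y` with a flip variable `ε ∈ {-1,1}`, `P(ε = -1) = η`, independent
of `(y,z)`. -/
theorem stmt1 {Ω : Type*} [MeasurableSpace Ω] (P : Measure Ω) [IsProbabilityMeasure P]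
    {p : ℕ} (w μ : EuclideanSpace ℝ (Fin p)) (y : Ω → ℝ)
    (z : Ω → EuclideanSpace ℝ (Fin p)) (ε : Ω → ℝ)
    (hy : Measurable y) (hz : Measurable z) (hε : Measurable ε)
    (hy1 : P {ω | y ω = 1} = 1/2) (hym1 : P {ω | y ω = -1} = 1/2)
    (hindyz : IndepFun y z P)
    (η : ℝ) (hη0 : 0 ≤ η) (hη : η < 1/2)
    (hε1 : P {ω | ε ω = -1} = ENNReal.ofReal η)
    (hε2 : P {ω | ε ω = 1} = ENNReal.ofReal (1 - η))
    (hindε : IndepFun ε (fun ω => (y ω, z ω)) P)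
    (hzint : ∀ i j : Fin p, Integrable (fun ω => z ω i * z ω j) P)
    (S : Matrix (Fin p) (Fin p) ℝ)
    (hS : ∀ i j, S i j = ∫ ω, z ω i * z ω j ∂P)
    (hwμ : 0 < ⟪w, μ⟫) :
    (P {ω | ⟪w, (ε ω * y ω) • (y ω • μ + z ω)⟫ < 0}).toReal
      ≤ η + (1 - η) / 2 * ‖S‖ * (‖w‖ / ⟪w, μ⟫)^2 := by
  have hconj : ∀ x v : EuclideanSpace ℝ (Fin p), ⟪x, v⟫ = ∑ i, x i * v i := fun x v => by
    simp [PiLp.inner_apply, RCLike.inner_apply]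
    exact Finset.sum_congr rfl fun i _ => mul_comm _ _
  set a : ℝ := ⟪w, μ⟫ with ha
  set g : Ω → ℝ := fun ω => ⟪w, z ω⟫ with hg
  have hgm : Measurable g := measurable_const.inner hz
  -- measurability of basic sets
  have hmy1 : MeasurableSet {ω | y ω = 1} := hy (measurableSet_singleton 1)
  have hmym : MeasurableSet {ω | y ω = -1} := hy (measurableSet_singleton (-1))
  have hmε1 : MeasurableSet {ω | ε ω = 1} := hε (measurableSet_singleton 1)
  have hmεm : MeasurableSet {ω | ε ω = -1} := hε (measurableSet_singleton (-1))
  -- a.s. y ∈ {±1}, ε ∈ {±1}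
  have hdisjy : Disjoint {ω | y ω = 1} {ω | y ω = -1} := by
    rw [Set.disjoint_left]
    intro ω h1 h2
    simp only [Set.mem_setOf_eq] at h1 h2
    rw [h1] at h2; norm_num at h2
  have hdisjε : Disjoint {ω | ε ω = -1} {ω | ε ω = 1} := by
    rw [Set.disjoint_left]
    intro ω h1 h2
    simp only [Set.mem_setOf_eq] at h1 h2
    rw [h1] at h2; norm_num at h2
  have hNy : P ({ω | y ω = 1} ∪ {ω | y ω = -1})ᶜ = 0 := by
    rw [measure_compl (hmy1.union hmym) (measure_ne_top _ _),
      measure_union hdisjy hmym, hy1, hym1, one_div, ENNReal.inv_two_add_inv_two, measure_univ, tsub_self]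
  have hNε : P ({ω | ε ω = -1} ∪ {ω | ε ω = 1})ᶜ = 0 := by
    rw [measure_compl (hmεm.union hmε1) (measure_ne_top _ _),
      measure_union hdisjε hmε1, hε1, hε2,
      ← ENNReal.ofReal_add hη0 (by linarith)]
    norm_num
  -- event B
  set B : Set Ω := {ω | a + y ω * g ω < 0} with hBdef
  have hval : ∀ ω, ⟪w, (ε ω * y ω) • (y ω • μ + z ω)⟫ = (ε ω * y ω) * (y ω * a + g ω) := by
    intro ω
    rw [real_inner_smul_right, inner_add_right, real_inner_smul_right]
  have hsub : {ω | ⟪w, (ε ω * y ω) • (y ω • μ + z ω)⟫ < 0} ⊆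
      ({ω | ε ω = -1} ∪ ({ω | ε ω = 1} ∩ B)) ∪
      (({ω | y ω = 1} ∪ {ω | y ω = -1})ᶜ ∪ ({ω | ε ω = -1} ∪ {ω | ε ω = 1})ᶜ) := by
    intro ω hω
    simp only [Set.mem_setOf_eq] at hω
    rw [hval ω] at hω
    by_cases hyω : y ω = 1 ∨ y ω = -1
    · by_cases hεω : ε ω = -1 ∨ ε ω = 1
      · left
        rcases hεω with h | h
        · exact Or.inl h
        · refine Or.inr ⟨h, ?_⟩
          show a + y ω * g ω < 0
          rcases hyω with h' | h' <;> rw [h, h'] at hω <;> rw [h'] <;> nlinarith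
      · right; right
        simp only [Set.mem_compl_iff, Set.mem_union, Set.mem_setOf_eq]
        tauto
    · right; left
      simp only [Set.mem_compl_iff, Set.mem_union, Set.mem_setOf_eq]
      tauto
  have hTm : MeasurableSet {q : ℝ × EuclideanSpace ℝ (Fin p) | a + q.1 * ⟪w, q.2⟫ < 0} := by
    have hc : Continuous fun q : ℝ × EuclideanSpace ℝ (Fin p) => a + q.1 * ⟪w, q.2⟫ :=
      continuous_const.add (continuous_fst.mul (Continuous.inner continuous_const continuous_snd))
    exact measurableSet_lt hc.measurable measurable_const
  have hBm : MeasurableSet B :=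
    measurableSet_lt (measurable_const.add (hy.mul hgm)) measurable_const
  have hεB : P ({ω | ε ω = 1} ∩ B) = ENNReal.ofReal (1 - η) * P B := by
    have h := hindε.measure_inter_preimage_eq_mul _ _ (measurableSet_singleton (1:ℝ)) hTm
    rw [← hε2]
    exact h
  have hPA : P {ω | ⟪w, (ε ω * y ω) • (y ω • μ + z ω)⟫ < 0}
      ≤ ENNReal.ofReal η + ENNReal.ofReal (1 - η) * P B := by
    calc P {ω | ⟪w, (ε ω * y ω) • (y ω • μ + z ω)⟫ < 0}
        ≤ P (({ω | ε ω = -1} ∪ ({ω | ε ω = 1} ∩ B)) ∪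
          (({ω | y ω = 1} ∪ {ω | y ω = -1})ᶜ ∪ ({ω | ε ω = -1} ∪ {ω | ε ω = 1})ᶜ)) :=
        measure_mono hsub
      _ ≤ P ({ω | ε ω = -1} ∪ ({ω | ε ω = 1} ∩ B)) +
          P (({ω | y ω = 1} ∪ {ω | y ω = -1})ᶜ ∪ ({ω | ε ω = -1} ∪ {ω | ε ω = 1})ᶜ) :=
        measure_union_le _ _
      _ = P ({ω | ε ω = -1} ∪ ({ω | ε ω = 1} ∩ B)) := by
        rw [measure_union_null hNy hNε, add_zero]
      _ ≤ P {ω | ε ω = -1} + P ({ω | ε ω = 1} ∩ B) := measure_union_le _ _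
      _ = ENNReal.ofReal η + ENNReal.ofReal (1 - η) * P B := by rw [hε1, hεB]
  -- split B on the sign of y
  have hgm1 : MeasurableSet {ω | g ω < -a} := measurableSet_lt hgm measurable_const
  have hgm2 : MeasurableSet {ω | a < g ω} := measurableSet_lt measurable_const hgm
  have hBsub : B ⊆ (({ω | y ω = 1} ∩ {ω | g ω < -a}) ∪ ({ω | y ω = -1} ∩ {ω | a < g ω})) ∪
      ({ω | y ω = 1} ∪ {ω | y ω = -1})ᶜ := by
    intro ω hω
    have hω' : a + y ω * g ω < 0 := hω
    by_cases hyω : y ω = 1 ∨ y ω = -1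
    · left
      rcases hyω with h | h
      · exact Or.inl ⟨h, by rw [h] at hω'; show g ω < -a; linarith⟩
      · exact Or.inr ⟨h, by rw [h] at hω'; show a < g ω; linarith⟩
    · right
      simp only [Set.mem_compl_iff, Set.mem_union, Set.mem_setOf_eq]
      tauto
  have hy_g1 : P ({ω | y ω = 1} ∩ {ω | g ω < -a}) = (1/2 : ℝ≥0∞) * P {ω | g ω < -a} := by
    have hvm : MeasurableSet {v : EuclideanSpace ℝ (Fin p) | ⟪w, v⟫ < -a} :=
      measurableSet_lt (Continuous.inner continuous_const continuous_id).measurable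
        measurable_const
    have h := hindyz.measure_inter_preimage_eq_mul _ _ (measurableSet_singleton (1:ℝ)) hvm
    rw [← hy1]
    exact h
  have hy_g2 : P ({ω | y ω = -1} ∩ {ω | a < g ω}) = (1/2 : ℝ≥0∞) * P {ω | a < g ω} := by
    have hvm : MeasurableSet {v : EuclideanSpace ℝ (Fin p) | a < ⟪w, v⟫} :=
      measurableSet_lt measurable_const
        (Continuous.inner continuous_const continuous_id).measurable
    have h := hindyz.measure_inter_preimage_eq_mul _ _ (measurableSet_singleton (-1:ℝ)) hvm
    rw [← hym1]
    exact h
  set C : Set Ω := {ω | a^2 ≤ g ω ^ 2} with hCdef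
  have hCsub : {ω | g ω < -a} ∪ {ω | a < g ω} ⊆ C := by
    rintro ω (h | h) <;> simp only [Set.mem_setOf_eq] at h <;> show a^2 ≤ g ω ^2 <;> nlinarith [hwμ]
  have hdisj_g : Disjoint {ω | g ω < -a} {ω | a < g ω} := by
    rw [Set.disjoint_left]
    intro ω h1 h2
    simp only [Set.mem_setOf_eq] at h1 h2
    linarith
  have hPB : P B ≤ (1/2 : ℝ≥0∞) * P C := by
    calc P B ≤ P ((({ω | y ω = 1} ∩ {ω | g ω < -a}) ∪ ({ω | y ω = -1} ∩ {ω | a < g ω})) ∪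
          ({ω | y ω = 1} ∪ {ω | y ω = -1})ᶜ) := measure_mono hBsub
      _ ≤ P (({ω | y ω = 1} ∩ {ω | g ω < -a}) ∪ ({ω | y ω = -1} ∩ {ω | a < g ω})) +
          P (({ω | y ω = 1} ∪ {ω | y ω = -1})ᶜ) := measure_union_le _ _
      _ = P (({ω | y ω = 1} ∩ {ω | g ω < -a}) ∪ ({ω | y ω = -1} ∩ {ω | a < g ω})) := by
        rw [hNy, add_zero]
      _ ≤ P ({ω | y ω = 1} ∩ {ω | g ω < -a}) + P ({ω | y ω = -1} ∩ {ω | a < g ω}) :=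
        measure_union_le _ _
      _ = (1/2 : ℝ≥0∞) * (P {ω | g ω < -a} + P {ω | a < g ω}) := by
        rw [hy_g1, hy_g2, mul_add]
      _ = (1/2 : ℝ≥0∞) * P ({ω | g ω < -a} ∪ {ω | a < g ω}) := by
        rw [measure_union hdisj_g hgm2]
      _ ≤ (1/2 : ℝ≥0∞) * P C := by
        exact mul_le_mul_right (measure_mono hCsub) _
  -- integrability and second moment
  have hsq_eq : (fun ω => g ω ^ 2) = fun ω => ∑ i, ∑ j, (w i * w j) * (z ω i * z ω j) := by
    funext ω
    rw [show g ω = ∑ i, w i * z ω i from hconj w (z ω), sq, Finset.sum_mul_sum]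
    exact Finset.sum_congr rfl fun i _ => Finset.sum_congr rfl fun j _ => by ring
  have hint : Integrable (fun ω => g ω ^ 2) P := by
    rw [hsq_eq]
    exact integrable_finset_sum _ fun i _ =>
      integrable_finset_sum _ fun j _ => (hzint i j).const_mul _
  have hEval : ∫ ω, g ω ^ 2 ∂P = ∑ i, ∑ j, (w i * w j) * S i j := by
    rw [hsq_eq, integral_finset_sum _
      (fun i _ => integrable_finset_sum _ fun j _ => (hzint i j).const_mul _)]
    refine Finset.sum_congr rfl fun i _ => ?_
    rw [integral_finset_sum _ fun j _ => (hzint i j).const_mul _]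
    refine Finset.sum_congr rfl fun j _ => ?_
    rw [integral_const_mul, hS i j]
  have hquad : ∑ i, ∑ j, (w i * w j) * S i j ≤ ‖S‖ * ‖w‖^2 := by
    have h1 : ⟪w, (EuclideanSpace.equiv (Fin p) ℝ).symm (S *ᵥ w)⟫
        = ∑ i, ∑ j, (w i * w j) * S i j := by
      simp [PiLp.inner_apply, RCLike.inner_apply, Matrix.mulVec, dotProduct,
        Finset.mul_sum]
      exact Finset.sum_congr rfl fun i _ => by
        rw [Finset.sum_mul]; exact Finset.sum_congr rfl fun j _ => by ring
    have h2 := real_inner_le_norm w ((EuclideanSpace.equiv (Fin p) ℝ).symm (S *ᵥ w))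
    have h3 := S.l2_opNorm_mulVec w
    nlinarith [norm_nonneg w, norm_nonneg ((EuclideanSpace.equiv (Fin p) ℝ).symm (S *ᵥ w))]
  have hmarkov : a^2 * (P C).toReal ≤ ∫ ω, g ω ^ 2 ∂P :=
    mul_meas_ge_le_integral_of_nonneg (ae_of_all _ fun ω => sq_nonneg _) hint (a^2)
  have hPC : (P C).toReal ≤ ‖S‖ * ‖w‖^2 / a^2 := by
    rw [le_div_iff₀ (by positivity : (0:ℝ) < a^2)]
    calc (P C).toReal * a^2 = a^2 * (P C).toReal := mul_comm _ _
      _ ≤ ∫ ω, g ω ^ 2 ∂P := hmarkov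
      _ ≤ ‖S‖ * ‖w‖^2 := hEval ▸ hquad
  -- put it together, in ℝ
  have hPBr : (P B).toReal ≤ 1/2 * (P C).toReal := by
    calc (P B).toReal ≤ ((1/2 : ℝ≥0∞) * P C).toReal :=
        ENNReal.toReal_mono (ENNReal.mul_ne_top (by norm_num) (measure_ne_top _ _)) hPB
      _ = 1/2 * (P C).toReal := by
        rw [ENNReal.toReal_mul]
        norm_num
  have hPAr : (P {ω | ⟪w, (ε ω * y ω) • (y ω • μ + z ω)⟫ < 0}).toReal
      ≤ η + (1 - η) * (P B).toReal := by
    calc (P {ω | ⟪w, (ε ω * y ω) • (y ω • μ + z ω)⟫ < 0}).toReal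
        ≤ (ENNReal.ofReal η + ENNReal.ofReal (1 - η) * P B).toReal :=
        ENNReal.toReal_mono (by
          exact ENNReal.add_ne_top.2 ⟨ENNReal.ofReal_ne_top,
            ENNReal.mul_ne_top ENNReal.ofReal_ne_top (measure_ne_top _ _)⟩) hPA
      _ = η + (1 - η) * (P B).toReal := by
        rw [ENNReal.toReal_add ENNReal.ofReal_ne_top
          (ENNReal.mul_ne_top ENNReal.ofReal_ne_top (measure_ne_top _ _)),
          ENNReal.toReal_mul, ENNReal.toReal_ofReal hη0,
          ENNReal.toReal_ofReal (by linarith)]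
  have hη1 : (0:ℝ) ≤ 1 - η := by linarith
  have hPCnn : (0:ℝ) ≤ (P C).toReal := ENNReal.toReal_nonneg
  calc (P {ω | ⟪w, (ε ω * y ω) • (y ω • μ + z ω)⟫ < 0}).toReal
      ≤ η + (1 - η) * (P B).toReal := hPAr
    _ ≤ η + (1 - η) * (1/2 * (‖S‖ * ‖w‖^2 / a^2)) := by
      have : (P B).toReal ≤ 1/2 * (‖S‖ * ‖w‖^2 / a^2) := by
        refine hPBr.trans ?_
        have := hPC
        linarith
      nlinarith
    _ = η + (1 - η) / 2 * ‖S‖ * (‖w‖ / a)^2 := by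
      field_simp
end

section
/- Let $\check A$ be a symmetric $n\times n$ matrix with $\|\check A - I_n\| \le \varepsilon$ for some $\varepsilon \in [0, 1/2]$. Then for all nonzero $\boldsymbol{a}, \boldsymbol{b} \in \mathbb{R}^n$, $\frac{\langle \boldsymbol{a},\boldsymbol{b}\rangle - \varepsilon\|\boldsymbol{a}\|\|\boldsymbol{b}\|}{1-\varepsilon^2} \le \boldsymbol{a}^\top \check A^{-1}\boldsymbol{b} \le \frac{\langle \boldsymbol{a},\boldsymbol{b}\rangle + \varepsilon\|\boldsymbol{a}\|\|\boldsymbol{b}\|}{1-\varepsilon^2}$. -/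
set_option maxHeartbeats 1000000


open Matrix
open scoped Matrix.Norms.L2Operator

private lemma quad_abs_le {n : ℕ} (M : Matrix (Fin n) (Fin n) ℝ) (x : Fin n → ℝ) :
    |x ⬝ᵥ (M *ᵥ x)| ≤ ‖M‖ * (x ⬝ᵥ x) := by
  set X : EuclideanSpace ℝ (Fin n) := (EuclideanSpace.equiv (Fin n) ℝ).symm x with hX
  set Y : EuclideanSpace ℝ (Fin n) := (EuclideanSpace.equiv (Fin n) ℝ).symm (M *ᵥ x) with hY
  have h1 : x ⬝ᵥ (M *ᵥ x) = inner ℝ X Y := by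
    simp [PiLp.inner_apply, dotProduct, X, Y, RCLike.inner_apply, mul_comm]
  have h2 : |inner ℝ X Y| ≤ ‖X‖ * ‖Y‖ := abs_real_inner_le_norm X Y
  have h3 : ‖Y‖ ≤ ‖M‖ * ‖X‖ := by simpa [X, Y] using M.l2_opNorm_mulVec X
  have h4 : ‖X‖ ^ 2 = x ⬝ᵥ x := by
    rw [EuclideanSpace.norm_eq, Real.sq_sqrt (by positivity)]
    simp [dotProduct, X, sq]
  have h5 : 0 ≤ ‖X‖ := norm_nonneg X
  have h6 : 0 ≤ ‖M‖ := norm_nonneg M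
  rw [h1]
  nlinarith [abs_nonneg (inner ℝ X Y : ℝ)]

private lemma sym_swap {n : ℕ} (M : Matrix (Fin n) (Fin n) ℝ) (hM : M.IsSymm)
    (x y : Fin n → ℝ) : x ⬝ᵥ (M *ᵥ y) = y ⬝ᵥ (M *ᵥ x) := by
  calc x ⬝ᵥ (M *ᵥ y) = (x ᵥ* M) ⬝ᵥ y := dotProduct_mulVec _ _ _
    _ = (x ᵥ* Mᵀᵀ) ⬝ᵥ y := by rw [Matrix.transpose_transpose]
    _ = (Mᵀ *ᵥ x) ⬝ᵥ y := by rw [vecMul_transpose]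
    _ = (M *ᵥ x) ⬝ᵥ y := by rw [hM]
    _ = y ⬝ᵥ (M *ᵥ x) := dotProduct_comm _ _

private lemma cs_aux {n : ℕ} (M : Matrix (Fin n) (Fin n) ℝ) (hM : M.IsSymm)
    (hpos : ∀ z, 0 ≤ z ⬝ᵥ (M *ᵥ z)) (x y : Fin n → ℝ) :
    (x ⬝ᵥ (M *ᵥ y)) ^ 2 ≤ (x ⬝ᵥ (M *ᵥ x)) * (y ⬝ᵥ (M *ᵥ y)) := by
  have h : ∀ t : ℝ, 0 ≤ (y ⬝ᵥ (M *ᵥ y)) * (t * t) + (2 * (x ⬝ᵥ (M *ᵥ y))) * t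
      + (x ⬝ᵥ (M *ᵥ x)) := by
    intro t
    have h0 := hpos (x + t • y)
    have hsw := sym_swap M hM x y
    simp only [Matrix.mulVec_add, Matrix.mulVec_smul, dotProduct_add, add_dotProduct,
      smul_dotProduct, dotProduct_smul, smul_eq_mul] at h0
    rw [hsw] at h0 ⊢
    nlinarith [h0]
  have hd := discrim_le_zero h
  rw [discrim] at hd
  nlinarith [hd]

/-- If `‖Ǎ - I‖ ≤ ε ≤ 1/2` (spectral norm), then for all nonzero `a, b`,
`(⟨a,b⟩ - ε‖a‖‖b‖)/(1-ε²) ≤ aᵀ Ǎ⁻¹ b ≤ (⟨a,b⟩ + ε‖a‖‖b‖)/(1-ε²)`. -/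
theorem stmt5 {n : ℕ} (A : Matrix (Fin n) (Fin n) ℝ) (hA : A.IsSymm)
    (ε : ℝ) (hε0 : 0 ≤ ε) (hε : ε ≤ 1/2)
    (hnorm : ‖A - (1 : Matrix (Fin n) (Fin n) ℝ)‖ ≤ ε)
    (a b : Fin n → ℝ) (ha : a ≠ 0) (hb : b ≠ 0) :
    (a ⬝ᵥ b - ε * Real.sqrt (a ⬝ᵥ a) * Real.sqrt (b ⬝ᵥ b)) / (1 - ε^2)
        ≤ a ⬝ᵥ (A⁻¹ *ᵥ b) ∧
      a ⬝ᵥ (A⁻¹ *ᵥ b)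
        ≤ (a ⬝ᵥ b + ε * Real.sqrt (a ⬝ᵥ a) * Real.sqrt (b ⬝ᵥ b)) / (1 - ε^2) := by
  have hε1 : (0:ℝ) < 1 - ε := by linarith
  have hε2 : (0:ℝ) < 1 + ε := by linarith
  have hε3 : (0:ℝ) < 1 - ε ^ 2 := by nlinarith
  -- basic dot-product facts
  have hdp_nonneg : ∀ z : Fin n → ℝ, 0 ≤ z ⬝ᵥ z := fun z =>
    Finset.sum_nonneg fun i _ => mul_self_nonneg (z i)
  -- quadratic form bounds for A
  have hquadA : ∀ z : Fin n → ℝ, (1 - ε) * (z ⬝ᵥ z) ≤ z ⬝ᵥ (A *ᵥ z)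
      ∧ z ⬝ᵥ (A *ᵥ z) ≤ (1 + ε) * (z ⬝ᵥ z) := by
    intro z
    have h1 := quad_abs_le (A - 1) z
    have hsub : z ⬝ᵥ ((A - 1) *ᵥ z) = z ⬝ᵥ (A *ᵥ z) - z ⬝ᵥ z := by
      rw [Matrix.sub_mulVec, dotProduct_sub, Matrix.one_mulVec]
    rw [hsub] at h1
    have h2 : ‖A - 1‖ * (z ⬝ᵥ z) ≤ ε * (z ⬝ᵥ z) :=
      mul_le_mul_of_nonneg_right hnorm (hdp_nonneg z)
    have h3 := abs_le.mp (h1.trans h2)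
    constructor <;> nlinarith [h3.1, h3.2]
  have hApos : ∀ z : Fin n → ℝ, 0 ≤ z ⬝ᵥ (A *ᵥ z) := fun z =>
    le_trans (by nlinarith [hdp_nonneg z]) (hquadA z).1
  -- A is positive definite
  have hPD : A.PosDef := by
    refine Matrix.PosDef.of_dotProduct_mulVec_pos (by rw [Matrix.IsHermitian, Matrix.conjTranspose_eq_transpose_of_trivial]; exact hA)
      (fun x hx => ?_)
    have hx0 : 0 < x ⬝ᵥ x := by
      rcases lt_or_eq_of_le (hdp_nonneg x) with h | h
      · exact h
      · exact absurd (dotProduct_self_eq_zero.mp h.symm) hx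
    have := (hquadA x).1
    simpa using lt_of_lt_of_le (by nlinarith) this
  have hUnit : IsUnit A.det := Matrix.isUnit_iff_isUnit_det A |>.1 hPD.isUnit
  have hAinv : A * A⁻¹ = 1 := Matrix.mul_nonsing_inv A hUnit
  set B := A⁻¹ with hB
  have hBsymm : B.IsSymm := by
    rw [Matrix.IsSymm, hB, Matrix.transpose_nonsing_inv, hA]
  have hABx : ∀ x : Fin n → ℝ, A *ᵥ (B *ᵥ x) = x := by
    intro x
    rw [Matrix.mulVec_mulVec, hAinv, Matrix.one_mulVec]
  -- Cauchy-Schwarz for the A-form and the Euclidean form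
  have hCSA := cs_aux A hA hApos
  have hCSE : ∀ x y : Fin n → ℝ, (x ⬝ᵥ y) ^ 2 ≤ (x ⬝ᵥ x) * (y ⬝ᵥ y) := by
    intro x y
    have := cs_aux (1 : Matrix (Fin n) (Fin n) ℝ) (Matrix.isSymm_one)
      (fun z => by simpa [Matrix.one_mulVec] using hdp_nonneg z) x y
    simpa [Matrix.one_mulVec] using this
  -- quadratic form bounds for B = A⁻¹
  have hBlo : ∀ x : Fin n → ℝ, x ⬝ᵥ x ≤ (1 + ε) * (x ⬝ᵥ (B *ᵥ x)) := by
    intro x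
    set y := B *ᵥ x with hy
    have h1 : x ⬝ᵥ (A *ᵥ y) = x ⬝ᵥ x := by rw [hy, hABx]
    have h2 : y ⬝ᵥ (A *ᵥ y) = x ⬝ᵥ y := by
      rw [hy, hABx, dotProduct_comm]
    have h3 := hCSA x y
    rw [h1, h2] at h3
    have h4 := (hquadA x).2
    have h5 : 0 ≤ x ⬝ᵥ y := by rw [← h2]; exact hApos y
    rcases eq_or_lt_of_le (hdp_nonneg x) with h | h
    · rw [← h]; positivity
    · nlinarith [h3, mul_le_mul_of_nonneg_right h4 h5, h]
  have hBhi : ∀ x : Fin n → ℝ, (1 - ε) * (x ⬝ᵥ (B *ᵥ x)) ≤ x ⬝ᵥ x := by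
    intro x
    set y := B *ᵥ x with hy
    have h2 : y ⬝ᵥ (A *ᵥ y) = x ⬝ᵥ y := by rw [hy, hABx, dotProduct_comm]
    have h5 : 0 ≤ x ⬝ᵥ y := by rw [← h2]; exact hApos y
    rcases eq_or_lt_of_le h5 with h | h
    · rw [← h]; simpa using hdp_nonneg x
    · have h3 := hCSE x y
      have h4 := (hquadA y).1
      rw [h2] at h4
      have e1 : (1 - ε) * (x ⬝ᵥ y) ^ 2 ≤ (1 - ε) * ((x ⬝ᵥ x) * (y ⬝ᵥ y)) :=
        mul_le_mul_of_nonneg_left h3 hε1.le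
      have e2 : (x ⬝ᵥ x) * ((1 - ε) * (y ⬝ᵥ y)) ≤ (x ⬝ᵥ x) * (x ⬝ᵥ y) :=
        mul_le_mul_of_nonneg_left h4 (hdp_nonneg x)
      nlinarith [e1, e2, h]
  -- norms
  have haa : 0 < a ⬝ᵥ a := by
    rcases lt_or_eq_of_le (hdp_nonneg a) with h | h
    · exact h
    · exact absurd (dotProduct_self_eq_zero.mp h.symm) ha
  have hbb : 0 < b ⬝ᵥ b := by
    rcases lt_or_eq_of_le (hdp_nonneg b) with h | h
    · exact h
    · exact absurd (dotProduct_self_eq_zero.mp h.symm) hb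
  set sa := Real.sqrt (a ⬝ᵥ a) with hsa
  set sb := Real.sqrt (b ⬝ᵥ b) with hsb
  have hsa2 : sa ^ 2 = a ⬝ᵥ a := Real.sq_sqrt (le_of_lt haa)
  have hsb2 : sb ^ 2 = b ⬝ᵥ b := Real.sq_sqrt (le_of_lt hbb)
  have hsa0 : 0 < sa := Real.sqrt_pos.2 haa
  have hsb0 : 0 < sb := Real.sqrt_pos.2 hbb
  -- polarization
  set u := sb • a + sa • b with hu
  set w := sb • a - sa • b with hw
  set P := a ⬝ᵥ (B *ᵥ b) with hP
  have hcross : b ⬝ᵥ (B *ᵥ a) = P := (sym_swap B hBsymm b a)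
  have huB : u ⬝ᵥ (B *ᵥ u) = sb^2 * (a ⬝ᵥ (B *ᵥ a)) + 2 * sa * sb * P
      + sa^2 * (b ⬝ᵥ (B *ᵥ b)) := by
    simp only [hu, Matrix.mulVec_add, Matrix.mulVec_smul, dotProduct_add, add_dotProduct,
      smul_dotProduct, dotProduct_smul, smul_eq_mul]
    rw [hcross, ← hP]; ring
  have hwB : w ⬝ᵥ (B *ᵥ w) = sb^2 * (a ⬝ᵥ (B *ᵥ a)) - 2 * sa * sb * P
      + sa^2 * (b ⬝ᵥ (B *ᵥ b)) := by
    simp only [hw, Matrix.mulVec_sub, Matrix.mulVec_smul, dotProduct_sub, sub_dotProduct,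
      smul_dotProduct, dotProduct_smul, smul_eq_mul]
    rw [hcross, ← hP]; ring
  have huu : u ⬝ᵥ u = 2 * sa^2 * sb^2 + 2 * sa * sb * (a ⬝ᵥ b) := by
    simp only [hu, dotProduct_add, add_dotProduct, smul_dotProduct, dotProduct_smul,
      smul_eq_mul]
    rw [dotProduct_comm b a, ← hsa2, ← hsb2]
    ring
  have hww : w ⬝ᵥ w = 2 * sa^2 * sb^2 - 2 * sa * sb * (a ⬝ᵥ b) := by
    simp only [hw, dotProduct_sub, sub_dotProduct, smul_dotProduct, dotProduct_smul,
      smul_eq_mul]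
    rw [dotProduct_comm b a, ← hsa2, ← hsb2]
    ring
  have h1 := hBhi u   -- (1-ε) * uBu ≤ uu
  have h2 := hBlo u   -- uu ≤ (1+ε) * uBu
  have h3 := hBhi w
  have h4 := hBlo w
  rw [huB, huu] at h1 h2
  rw [hwB, hww] at h3 h4
  have hsasb : 0 < sa * sb := mul_pos hsa0 hsb0
  constructor
  · rw [div_le_iff₀ hε3]
    nlinarith [h2, h3, hsasb]
  · rw [le_div_iff₀ hε3]
    nlinarith [h1, h4, hsasb]
end

section
/- Let $X_1,\dots,X_n$ be independent mean-zero real random variables with $\mathbb{E}|X_i|^\nu < \infty$ for some $\nu \in [1,2]$. Then $\mathbb{E}\left|\sum_{i=1}^n X_i\right|^\nu \le 2\sum_{i=1}^n \mathbb{E}|X_i|^\nu$. -/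
open MeasureTheory ProbabilityTheory Real Finset

lemma be_measurable_sign : Measurable Real.sign := by
  have : Real.sign = fun r : ℝ => if r < 0 then (-1:ℝ) else if 0 < r then 1 else 0 := rfl
  rw [this]
  exact Measurable.ite measurableSet_Iio measurable_const
    (Measurable.ite measurableSet_Ioi measurable_const measurable_const)

lemma be_abs_sign (t : ℝ) : |Real.sign t| ≤ 1 := by
  rcases Real.sign_apply_eq t with h | h | h <;> rw [h] <;> norm_num

lemma be_rpow_add_le {p a b : ℝ} (hp0 : 0 ≤ p) (hp1 : p ≤ 1) (ha : 0 ≤ a) (hb : 0 ≤ b) :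
    (a + b) ^ p ≤ a ^ p + b ^ p := by
  have h := NNReal.rpow_add_le_add_rpow a.toNNReal b.toNNReal hp0 hp1
  have h3 := NNReal.coe_le_coe.mpr h
  push_cast [NNReal.coe_rpow, Real.coe_toNNReal a ha, Real.coe_toNNReal b hb] at h3
  exact h3

lemma be_rpow_sub_abs {p a b : ℝ} (hp0 : 0 < p) (hp1 : p ≤ 1) (ha : 0 ≤ a) (hb : 0 ≤ b) :
    |a ^ p - b ^ p| ≤ |a - b| ^ p := by
  wlog hab : b ≤ a generalizing a b
  · have := this hb ha (le_of_not_ge hab)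
    rw [abs_sub_comm b a] at this
    rwa [abs_sub_comm] at this
  have h1 : a ^ p ≤ (a - b) ^ p + b ^ p := by
    have := be_rpow_add_le hp0.le hp1 (sub_nonneg.mpr hab) hb
    rwa [sub_add_cancel] at this
  have h2 : b ^ p ≤ a ^ p := Real.rpow_le_rpow hb hab hp0.le
  rw [abs_of_nonneg (sub_nonneg.mpr h2), abs_of_nonneg (sub_nonneg.mpr hab)]
  linarith

lemma be_sign_mul_abs_rpow_nonneg {p : ℝ} (hp : 0 < p) {a : ℝ} (ha : 0 ≤ a) :
    Real.sign a * |a| ^ p = a ^ p := by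
  rcases eq_or_lt_of_le ha with h | h
  · rw [← h]
    simp [Real.sign_zero, Real.zero_rpow hp.ne']
  · rw [Real.sign_of_pos h, abs_of_pos h, one_mul]

lemma be_sign_mul_abs_rpow_neg {p : ℝ} {a : ℝ} (ha : a < 0) :
    Real.sign a * |a| ^ p = -((-a) ^ p) := by
  rw [Real.sign_of_neg ha, abs_of_neg ha, neg_one_mul]

lemma be_holder {p : ℝ} (hp0 : 0 ≤ p) (hp1 : p ≤ 1) (a b : ℝ) :
    |Real.sign a * |a| ^ p - Real.sign b * |b| ^ p| ≤ 2 * |a - b| ^ p := by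
  rcases eq_or_lt_of_le hp0 with rfl | hp
  · simp only [Real.rpow_zero, mul_one]
    calc |Real.sign a - Real.sign b| ≤ |Real.sign a| + |Real.sign b| := abs_sub _ _
    _ ≤ 2 := by have := be_abs_sign a; have := be_abs_sign b; linarith
  have key : ∀ x y : ℝ, 0 ≤ x → 0 ≤ y → x ^ p + y ^ p ≤ 2 * (x + y) ^ p := by
    intro x y hx hy
    have h1 : x ^ p ≤ (x + y) ^ p := Real.rpow_le_rpow hx (by linarith) hp.le
    have h2 : y ^ p ≤ (x + y) ^ p := Real.rpow_le_rpow hy (by linarith) hp.le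
    linarith
  rcases le_or_gt 0 a with ha | ha <;> rcases le_or_gt 0 b with hb | hb
  · rw [be_sign_mul_abs_rpow_nonneg hp ha, be_sign_mul_abs_rpow_nonneg hp hb]
    have := be_rpow_sub_abs hp hp1 ha hb
    have h0 : (0:ℝ) ≤ |a - b| ^ p := Real.rpow_nonneg (abs_nonneg _) _
    linarith
  · rw [be_sign_mul_abs_rpow_nonneg hp ha, be_sign_mul_abs_rpow_neg hb, sub_neg_eq_add]
    have h1 : 0 ≤ a ^ p := Real.rpow_nonneg ha _
    have h2 : 0 ≤ (-b) ^ p := Real.rpow_nonneg (by linarith) _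
    rw [abs_of_nonneg (by linarith), abs_of_nonneg (by linarith : (0:ℝ) ≤ a - b)]
    have := key a (-b) ha (by linarith)
    calc a ^ p + (-b) ^ p ≤ 2 * (a + -b) ^ p := this
    _ = 2 * (a - b) ^ p := by ring_nf
  · rw [be_sign_mul_abs_rpow_neg ha, be_sign_mul_abs_rpow_nonneg hp hb]
    have h1 : 0 ≤ (-a) ^ p := Real.rpow_nonneg (by linarith) _
    have h2 : 0 ≤ b ^ p := Real.rpow_nonneg hb _
    rw [abs_of_nonpos (by linarith), abs_of_neg (by linarith : a - b < 0)]
    have := key (-a) b (by linarith) hb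
    calc -(-((-a) ^ p) - b ^ p) = (-a) ^ p + b ^ p := by ring
    _ ≤ 2 * (-a + b) ^ p := this
    _ = 2 * (-(a - b)) ^ p := by ring_nf
  · rw [be_sign_mul_abs_rpow_neg ha, be_sign_mul_abs_rpow_neg hb]
    have heq : -((-a) ^ p) - -((-b) ^ p) = (-b) ^ p - (-a) ^ p := by ring
    rw [heq]
    have := be_rpow_sub_abs hp hp1 (by linarith : (0:ℝ) ≤ -b) (by linarith : (0:ℝ) ≤ -a)
    have heq2 : -b - -a = a - b := by ring
    rw [heq2] at this
    have h0 : (0:ℝ) ≤ |a - b| ^ p := Real.rpow_nonneg (abs_nonneg _) _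
    linarith

open Filter in
lemma be_continuous_sign_rpow {p : ℝ} (hp0 : 0 < p) (hp1 : p ≤ 1) :
    Continuous fun t : ℝ => Real.sign t * |t| ^ p := by
  rw [continuous_iff_continuousAt]
  intro x
  rw [ContinuousAt, ← tendsto_sub_nhds_zero_iff]
  have hb : Tendsto (fun t : ℝ => 2 * |t - x| ^ p) (nhds x) (nhds 0) := by
    have h1 : Tendsto (fun t : ℝ => |t - x|) (nhds x) (nhds 0) := by
      have hc : Continuous fun t : ℝ => |t - x| := (continuous_id.sub continuous_const).abs
      simpa using hc.tendsto x
    have h2 : ContinuousAt (fun y : ℝ => y ^ p) 0 :=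
      Real.continuousAt_rpow_const 0 p (Or.inr hp0.le)
    have h3 := h2.tendsto.comp h1
    rw [Real.zero_rpow hp0.ne'] at h3
    simpa using h3.const_mul (2:ℝ)
  refine squeeze_zero_norm (fun t => ?_) hb
  exact be_holder hp0.le hp1 t x

open Filter in
lemma be_hasDerivAt {ν : ℝ} (hν : 1 < ν) (x : ℝ) :
    HasDerivAt (fun t : ℝ => |t| ^ ν) (ν * (Real.sign x * |x| ^ (ν - 1))) x := by
  rcases lt_trichotomy x 0 with hx | rfl | hx
  · have h1 : HasDerivAt (fun y : ℝ => y ^ ν) (ν * (-x) ^ (ν - 1)) (-x) :=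
      Real.hasDerivAt_rpow_const (Or.inl (by linarith))
    have h2 : HasDerivAt (fun t : ℝ => -t) (-1 : ℝ) x := by
      exact hasDerivAt_neg x
    have h0 : HasDerivAt (fun t : ℝ => (-t) ^ ν) (ν * (-x) ^ (ν - 1) * (-1)) x := h1.comp x h2
    have heq : (fun t : ℝ => |t| ^ ν) =ᶠ[nhds x] fun t : ℝ => (-t) ^ ν := by
      filter_upwards [Iio_mem_nhds hx] with t ht
      rw [abs_of_neg ht]
    have := h0.congr_of_eventuallyEq heq
    refine this.congr_deriv ?_
    rw [Real.sign_of_neg hx, abs_of_neg hx]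
    ring
  · have hz : (ν : ℝ) * (Real.sign 0 * |(0:ℝ)| ^ (ν - 1)) = 0 := by
      simp [Real.sign_zero]
    rw [hz, hasDerivAt_iff_tendsto_slope]
    have hb : Tendsto (fun t : ℝ => |t| ^ (ν - 1)) (nhdsWithin (0:ℝ) {(0:ℝ)}ᶜ) (nhds 0) := by
      have h2 : ContinuousAt (fun y : ℝ => y ^ (ν - 1)) 0 :=
        Real.continuousAt_rpow_const 0 _ (Or.inr (by linarith))
      have habs : Tendsto (fun t : ℝ => |t|) (nhds 0) (nhds 0) := by
        simpa using continuous_abs.tendsto (0:ℝ)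
      have h3 := h2.tendsto.comp habs
      rw [Real.zero_rpow (by linarith : ν - 1 ≠ 0)] at h3
      exact h3.mono_left nhdsWithin_le_nhds
    refine squeeze_zero_norm' ?_ hb
    filter_upwards [self_mem_nhdsWithin] with t ht
    have ht0 : t ≠ (0:ℝ) := ht
    have htpos : (0:ℝ) < |t| := abs_pos.mpr ht0
    rw [slope_def_field]
    have hf0 : (|(0:ℝ)| ^ ν) = 0 := by
      rw [abs_zero, Real.zero_rpow (by linarith : ν ≠ 0)]
    rw [hf0, sub_zero, sub_zero, norm_div, Real.norm_eq_abs, Real.norm_eq_abs,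
      abs_of_nonneg (Real.rpow_nonneg (abs_nonneg t) ν)]
    rw [Real.rpow_sub_one htpos.ne']
  · have h0 : HasDerivAt (fun t : ℝ => t ^ ν) (ν * x ^ (ν - 1)) x :=
      Real.hasDerivAt_rpow_const (Or.inl (by linarith))
    have heq : (fun t : ℝ => |t| ^ ν) =ᶠ[nhds x] fun t : ℝ => t ^ ν := by
      filter_upwards [Ioi_mem_nhds hx] with t ht
      rw [abs_of_pos ht]
    have := h0.congr_of_eventuallyEq heq
    refine this.congr_deriv ?_
    rw [Real.sign_of_pos hx, abs_of_pos hx]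
    ring

lemma be_key_pos {ν : ℝ} (hν : 1 < ν) (hν2 : ν ≤ 2) (x y : ℝ) (hy : 0 ≤ y) :
    |x + y| ^ ν ≤ |x| ^ ν + ν * (Real.sign x * |x| ^ (ν - 1)) * y + 2 * |y| ^ ν := by
  set g : ℝ → ℝ := fun t => ν * (Real.sign t * |t| ^ (ν - 1)) with hg
  have hp0 : (0:ℝ) < ν - 1 := by linarith
  have hp1 : ν - 1 ≤ 1 := by linarith
  have hgc : Continuous g := continuous_const.mul (be_continuous_sign_rpow hp0 hp1)
  have hle : x ≤ x + y := by linarith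
  have ftc : ∫ t in x..(x + y), g t = |x + y| ^ ν - |x| ^ ν :=
    intervalIntegral.integral_eq_sub_of_hasDerivAt (fun t _ => be_hasDerivAt hν t)
      (hgc.intervalIntegrable _ _)
  -- bound function
  have hbc : Continuous fun t : ℝ => 2 * ν * (t - x) ^ (ν - 1) := by
    have : Continuous fun s : ℝ => s ^ (ν - 1) := by
      rw [continuous_iff_continuousAt]
      intro z
      exact Real.continuousAt_rpow_const z _ (Or.inr hp0.le)
    exact continuous_const.mul (this.comp (continuous_id.sub continuous_const))
  have hmono : ∫ t in x..(x + y), (g t - g x) ≤ ∫ t in x..(x + y), 2 * ν * (t - x) ^ (ν - 1) := by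
    refine intervalIntegral.integral_mono_on hle
      ((hgc.sub continuous_const).intervalIntegrable _ _)
      (hbc.intervalIntegrable _ _) ?_
    intro t ht
    have h1 : g t - g x ≤ |g t - g x| := le_abs_self _
    have h2 : |g t - g x| ≤ ν * (2 * |t - x| ^ (ν - 1)) := by
      rw [hg]
      have := be_holder hp0.le hp1 t x
      calc |ν * (Real.sign t * |t| ^ (ν - 1)) - ν * (Real.sign x * |x| ^ (ν - 1))|
          = ν * |Real.sign t * |t| ^ (ν - 1) - Real.sign x * |x| ^ (ν - 1)| := by
            rw [← mul_sub, abs_mul, abs_of_nonneg (by linarith : (0:ℝ) ≤ ν)]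
      _ ≤ ν * (2 * |t - x| ^ (ν - 1)) := by
            exact mul_le_mul_of_nonneg_left this (by linarith)
    have h3 : |t - x| = t - x := abs_of_nonneg (by linarith [ht.1])
    calc g t - g x ≤ ν * (2 * |t - x| ^ (ν - 1)) := le_trans h1 h2
    _ = 2 * ν * (t - x) ^ (ν - 1) := by rw [h3]; ring
  have hsub : ∫ t in x..(x + y), (g t - g x) = (|x + y| ^ ν - |x| ^ ν) - g x * y := by
    rw [intervalIntegral.integral_sub (hgc.intervalIntegrable _ _)
      (intervalIntegrable_const), ftc, intervalIntegral.integral_const]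
    simp
    ring
  have hcomp : ∫ t in x..(x + y), 2 * ν * (t - x) ^ (ν - 1) = 2 * y ^ ν := by
    rw [intervalIntegral.integral_const_mul]
    have hcs : ∫ t in x..(x + y), (t - x) ^ (ν - 1) = ∫ s in (0:ℝ)..y, s ^ (ν - 1) := by
      have := intervalIntegral.integral_comp_sub_right (a := x) (b := x + y)
        (fun s => s ^ (ν - 1)) x
      simpa using this
    rw [hcs, integral_rpow (Or.inl (by linarith : (-1:ℝ) < ν - 1))]
    rw [Real.zero_rpow (by linarith : ν - 1 + 1 ≠ 0), sub_add_cancel]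
    field_simp
    ring
  have hyabs : |y| = y := abs_of_nonneg hy
  rw [hsub, hcomp] at hmono
  have hgx : g x = ν * (Real.sign x * |x| ^ (ν - 1)) := rfl
  rw [hgx] at hmono
  rw [hyabs]
  linarith

lemma be_key {ν : ℝ} (hν1 : 1 ≤ ν) (hν2 : ν ≤ 2) (x y : ℝ) :
    |x + y| ^ ν ≤ |x| ^ ν + ν * (Real.sign x * |x| ^ (ν - 1)) * y + 2 * |y| ^ ν := by
  rcases eq_or_lt_of_le hν1 with rfl | hν
  · simp only [Real.rpow_one, sub_self, Real.rpow_zero, mul_one, one_mul]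
    have h1 : |x + y| ≤ |x| + |y| := abs_add_le x y
    have h2 : |Real.sign x * y| ≤ |y| := by
      rw [abs_mul]
      have := be_abs_sign x
      have := abs_nonneg y
      nlinarith
    have h3 : -|y| ≤ Real.sign x * y := (abs_le.mp h2).1
    linarith
  rcases le_or_gt 0 y with hy | hy
  · exact be_key_pos hν hν2 x y hy
  · have := be_key_pos hν hν2 (-x) (-y) (by linarith)
    rw [← neg_add, abs_neg, abs_neg, abs_neg, Real.sign_neg] at this
    calc |x + y| ^ ν ≤ |x| ^ ν + ν * (-Real.sign x * |x| ^ (ν - 1)) * (-y) + 2 * |y| ^ ν := this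
    _ = |x| ^ ν + ν * (Real.sign x * |x| ^ (ν - 1)) * y + 2 * |y| ^ ν := by ring

lemma be_continuous_abs_rpow {p : ℝ} (hp : 0 ≤ p) : Continuous fun t : ℝ => |t| ^ p := by
  have h : Continuous fun s : ℝ => s ^ p :=
    continuous_iff_continuousAt.2 fun z => Real.continuousAt_rpow_const z _ (Or.inr hp)
  exact h.comp continuous_abs

lemma be_abs_add_rpow_le {ν a b : ℝ} (hν : 0 ≤ ν) :
    |a + b| ^ ν ≤ 2 ^ ν * (|a| ^ ν + |b| ^ ν) := by
  set m := max |a| |b| with hm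
  have hm0 : 0 ≤ m := (abs_nonneg a).trans (le_max_left _ _)
  have h1 : |a + b| ≤ 2 * m := by
    have := abs_add_le a b
    have := le_max_left |a| |b|
    have := le_max_right |a| |b|
    linarith
  have h2 : |a + b| ^ ν ≤ (2 * m) ^ ν := Real.rpow_le_rpow (abs_nonneg _) h1 hν
  have h3 : (2 * m) ^ ν = 2 ^ ν * m ^ ν := Real.mul_rpow (by norm_num) hm0
  have h4 : m ^ ν ≤ |a| ^ ν + |b| ^ ν := by
    rcases max_cases |a| |b| with ⟨he, _⟩ | ⟨he, _⟩ <;> rw [hm, he]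
    · have := Real.rpow_nonneg (abs_nonneg b) ν; linarith
    · have := Real.rpow_nonneg (abs_nonneg a) ν; linarith
  have h5 : (0:ℝ) ≤ 2 ^ ν := Real.rpow_nonneg (by norm_num) ν
  calc |a + b| ^ ν ≤ 2 ^ ν * m ^ ν := by rw [← h3]; exact h2
  _ ≤ 2 ^ ν * (|a| ^ ν + |b| ^ ν) := mul_le_mul_of_nonneg_left h4 h5

lemma be_rpow_sub_one_le {ν t : ℝ} (hν : 1 ≤ ν) : |t| ^ (ν - 1) ≤ 1 + |t| ^ ν := by
  rcases le_or_gt |t| 1 with h | h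
  · have h1 : |t| ^ (ν - 1) ≤ 1 := Real.rpow_le_one (abs_nonneg t) h (by linarith)
    have h2 : 0 ≤ |t| ^ ν := Real.rpow_nonneg (abs_nonneg t) ν
    linarith
  · have h1 : |t| ^ (ν - 1) ≤ |t| ^ ν := Real.rpow_le_rpow_of_exponent_le h.le (by linarith)
    linarith

/-- Bahr–Esseen inequality: for independent centered real random variables with
finite `ν`-th moment, `ν ∈ [1,2]`, one has `E|∑ Xᵢ|^ν ≤ 2 ∑ E|Xᵢ|^ν`. -/
theorem stmt7 {Ω : Type*} [MeasurableSpace Ω] (P : Measure Ω) [IsProbabilityMeasure P]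
    {n : ℕ} (X : Fin n → Ω → ℝ)
    (hmeas : ∀ i, Measurable (X i))
    (hind : iIndepFun X P)
    (hint : ∀ i, Integrable (X i) P)
    (hmean : ∀ i, ∫ ω, X i ω ∂P = 0)
    (ν : ℝ) (hν1 : 1 ≤ ν) (hν2 : ν ≤ 2)
    (hmom : ∀ i, ∫⁻ ω, ENNReal.ofReal (|X i ω| ^ ν) ∂P < ⊤) :
    ∫⁻ ω, ENNReal.ofReal (|∑ i, X i ω| ^ ν) ∂P
      ≤ 2 * ∑ i, ∫⁻ ω, ENNReal.ofReal (|X i ω| ^ ν) ∂P := by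
  classical
  have hν0 : (0:ℝ) < ν := by linarith
  have habsm : ∀ (f : Ω → ℝ), Measurable f → Measurable fun ω => |f ω| ^ ν :=
    fun f hf => (be_continuous_abs_rpow hν0.le).measurable.comp hf
  have hiq : ∀ i, Integrable (fun ω => |X i ω| ^ ν) P := by
    intro i
    refine ⟨(habsm _ (hmeas i)).aestronglyMeasurable, ?_⟩
    rw [hasFiniteIntegral_iff_ofReal (ae_of_all _ fun ω => Real.rpow_nonneg (abs_nonneg _) _)]
    exact hmom i
  have hSmeas : ∀ s : Finset (Fin n), Measurable fun ω => ∑ i ∈ s, X i ω :=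
    fun s => Finset.measurable_sum s fun i _ => hmeas i
  have hSint : ∀ s : Finset (Fin n), Integrable (fun ω => |∑ i ∈ s, X i ω| ^ ν) P := by
    intro s
    induction s using Finset.induction_on with
    | empty =>
      simp only [Finset.sum_empty, abs_zero, Real.zero_rpow hν0.ne']
      exact integrable_const 0
    | @insert j s hj ih =>
      simp only [Finset.sum_insert hj]
      refine Integrable.mono (((hiq j).add ih).const_mul (2 ^ ν))
        (habsm _ ((hmeas j).add (hSmeas s))).aestronglyMeasurable ?_
      refine ae_of_all _ fun ω => ?_
      rw [Real.norm_eq_abs, Real.norm_eq_abs,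
        abs_of_nonneg (Real.rpow_nonneg (abs_nonneg _) _)]
      have h1 := be_abs_add_rpow_le (a := X j ω) (b := ∑ i ∈ s, X i ω) hν0.le
      have h2 : 0 ≤ 2 ^ ν * (|X j ω| ^ ν + |∑ i ∈ s, X i ω| ^ ν) := by
        have := Real.rpow_nonneg (abs_nonneg (X j ω)) ν
        have := Real.rpow_nonneg (abs_nonneg (∑ i ∈ s, X i ω)) ν
        have : (0:ℝ) ≤ 2 ^ ν := Real.rpow_nonneg (by norm_num) ν
        positivity
      rw [Pi.add_apply, abs_of_nonneg h2]
      calc |X j ω + ∑ i ∈ s, X i ω| ^ ν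
          ≤ 2 ^ ν * (|X j ω| ^ ν + |∑ i ∈ s, X i ω| ^ ν) := h1
      _ = 2 ^ ν * (|X j ω| ^ ν + |∑ i ∈ s, X i ω| ^ ν) := rfl
  have main : ∀ s : Finset (Fin n),
      ∫ ω, |∑ i ∈ s, X i ω| ^ ν ∂P ≤ ∑ i ∈ s, 2 * ∫ ω, |X i ω| ^ ν ∂P := by
    intro s
    induction s using Finset.induction_on with
    | empty =>
      simp [Real.zero_rpow hν0.ne']
    | @insert j s hj ih =>
      set S : Ω → ℝ := fun ω => ∑ i ∈ s, X i ω with hS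
      have hSm : Measurable S := hSmeas s
      have hindep : IndepFun S (X j) P := by
        have h := hind.indepFun_finsetSum_of_notMem hmeas hj
        have he : S = ∑ i ∈ s, X i := by
          ext ω; rw [hS]; simp [Finset.sum_apply]
        rwa [he]
      set H : Ω → ℝ := fun ω => Real.sign (S ω) * |S ω| ^ (ν - 1) with hH
      have hHm : Measurable H :=
        (be_measurable_sign.comp hSm).mul
          (((be_continuous_abs_rpow (by linarith : (0:ℝ) ≤ ν - 1)).measurable).comp hSm)
      have hHint : Integrable H P := by
        refine Integrable.mono ((integrable_const (1:ℝ)).add (hSint s))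
          hHm.aestronglyMeasurable (ae_of_all _ fun ω => ?_)
        simp only [Pi.add_apply, Real.norm_eq_abs]
        show |H ω| ≤ |1 + |S ω| ^ ν|
        have h1 : |H ω| ≤ |S ω| ^ (ν - 1) := by
          rw [hH, abs_mul, abs_of_nonneg (Real.rpow_nonneg (abs_nonneg _) _)]
          have := be_abs_sign (S ω)
          have := Real.rpow_nonneg (abs_nonneg (S ω)) (ν - 1)
          nlinarith
        have h2 := be_rpow_sub_one_le (t := S ω) hν1
        have h3 : |1 + |S ω| ^ ν| = 1 + |S ω| ^ ν := by
          have := Real.rpow_nonneg (abs_nonneg (S ω)) ν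
          exact abs_of_nonneg (by linarith)
        linarith
      have hHXindep : IndepFun H (X j) P := by
        have := hindep.comp
          (be_measurable_sign.mul ((be_continuous_abs_rpow
            (by linarith : (0:ℝ) ≤ ν - 1)).measurable)) measurable_id
        exact this
      have hprod : Integrable (fun ω => H ω * X j ω) P := by
        have := hHXindep.integrable_mul hHint (hint j)
        exact this
      have hmid : ∫ ω, H ω * X j ω ∂P = 0 := by
        have h := hHXindep.integral_fun_mul_eq_mul_integral hHint.aestronglyMeasurable (hint j).aestronglyMeasurable
        rw [hmean j, mul_zero] at h
        exact h
      have hpt : ∀ ω, |∑ i ∈ insert j s, X i ω| ^ ν ≤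
          |S ω| ^ ν + ν * (H ω * X j ω) + 2 * |X j ω| ^ ν := by
        intro ω
        rw [Finset.sum_insert hj, add_comm (X j ω)]
        calc |S ω + X j ω| ^ ν
            ≤ |S ω| ^ ν + ν * (Real.sign (S ω) * |S ω| ^ (ν - 1)) * X j ω + 2 * |X j ω| ^ ν :=
              be_key hν1 hν2 (S ω) (X j ω)
        _ = |S ω| ^ ν + ν * (H ω * X j ω) + 2 * |X j ω| ^ ν := by rw [hH]; ring
      have hRint1 : Integrable (fun ω => |S ω| ^ ν + ν * (H ω * X j ω)) P :=
        (hSint s).add (hprod.const_mul ν)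
      have hRint : Integrable (fun ω => |S ω| ^ ν + ν * (H ω * X j ω) + 2 * |X j ω| ^ ν) P :=
        hRint1.add ((hiq j).const_mul 2)
      have hle := integral_mono (hSint (insert j s)) hRint hpt
      rw [integral_add hRint1 ((hiq j).const_mul 2),
        integral_add (hSint s) (hprod.const_mul ν), integral_const_mul, integral_const_mul,
        hmid, mul_zero, add_zero] at hle
      rw [Finset.sum_insert hj]
      have h2i : 0 ≤ ∫ ω, |X j ω| ^ ν ∂P :=
        integral_nonneg fun ω => Real.rpow_nonneg (abs_nonneg _) _
      linarith
  have hnn : ∀ (f : Ω → ℝ), (∀ ω, (0:ℝ) ≤ f ω) → Integrable f P →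
      ∫⁻ ω, ENNReal.ofReal (f ω) ∂P = ENNReal.ofReal (∫ ω, f ω ∂P) :=
    fun f h hf => (ofReal_integral_eq_lintegral_ofReal hf (ae_of_all _ h)).symm
  rw [hnn _ (fun ω => Real.rpow_nonneg (abs_nonneg _) _) (hSint Finset.univ)]
  have hR : ∀ i : Fin n, ∫⁻ ω, ENNReal.ofReal (|X i ω| ^ ν) ∂P
      = ENNReal.ofReal (∫ ω, |X i ω| ^ ν ∂P) :=
    fun i => hnn _ (fun ω => Real.rpow_nonneg (abs_nonneg _) _) (hiq i)
  rw [Finset.sum_congr rfl fun i _ => hR i]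
  rw [← ENNReal.ofReal_sum_of_nonneg fun i _ =>
    integral_nonneg fun ω => Real.rpow_nonneg (abs_nonneg _) _]
  have h2 : (2:ENNReal) * ENNReal.ofReal (∑ i, ∫ ω, |X i ω| ^ ν ∂P)
      = ENNReal.ofReal (2 * ∑ i, ∫ ω, |X i ω| ^ ν ∂P) := by
    rw [ENNReal.ofReal_mul (by norm_num : (0:ℝ) ≤ 2)]
    norm_num
  rw [h2]
  refine ENNReal.ofReal_le_ofReal ?_
  have := main Finset.univ
  rw [← Finset.mul_sum] at this
  exact this
end

section
/- Under the geometric assumptions of the noiseless orthogonal model — $\boldsymbol{z}_i$ pairwise orthogonal, each orthogonal to $\boldsymbol{\mu}$, all nonzero — the vector $\bar{\boldsymbol{w}} = \frac{\boldsymbol{\mu} + \boldsymbol{z}_\perp}{\|\boldsymbol{\mu}\|^2 + \|\boldsymbol{z}_\perp\|^2}$, where $\boldsymbol{z}_\perp = \frac{\bar Z^\top(\bar Z\bar Z^\top)^{-1}\mathbf{1}}{\mathbf{1}^\top(\bar Z\bar Z^\top)^{-1}\mathbf{1}}$, satisfies $\langle \bar{\boldsymbol{w}}, \bar{\boldsymbol{x}}_i\rangle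 = 1$ for all $i = 1,\dots,n$. -/
open Matrix

/-- In the fully orthogonal noiseless model, the vector
`w̄ = (μ + z⊥)/(‖μ‖² + ‖z⊥‖²)` with
`z⊥ = Z̄ᵀ(Z̄Z̄ᵀ)⁻¹𝟙 / (𝟙ᵀ(Z̄Z̄ᵀ)⁻¹𝟙)` satisfies `⟨w̄, x̄ᵢ⟩ = 1` for all `i`. -/
theorem stmt17 {n p : ℕ} (z : Fin n → Fin p → ℝ) (μ : Fin p → ℝ) (y : Fin n → ℝ)
    (hy : ∀ i, y i = 1 ∨ y i = -1)
    (horth : ∀ i j, i ≠ j → z i ⬝ᵥ z j = 0)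
    (hμorth : ∀ i, z i ⬝ᵥ μ = 0)
    (hz : ∀ i, z i ≠ 0)
    (Zbar : Matrix (Fin n) (Fin p) ℝ) (hZbar : Zbar = Matrix.of (fun i => y i • z i))
    (one : Fin n → ℝ) (hone : one = fun _ => 1)
    (zperp : Fin p → ℝ)
    (hzperp : zperp
      = (one ⬝ᵥ ((Zbar * Zbarᵀ)⁻¹ *ᵥ one))⁻¹ • (Zbarᵀ *ᵥ ((Zbar * Zbarᵀ)⁻¹ *ᵥ one)))
    (wbar : Fin p → ℝ)
    (hwbar : wbar = (μ ⬝ᵥ μ + zperp ⬝ᵥ zperp)⁻¹ • (μ + zperp)) :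
    ∀ i, wbar ⬝ᵥ (μ + y i • z i) = 1 := by
  intro k
  have hy2 : ∀ i, y i * y i = 1 := by
    intro i; rcases hy i with h | h <;> simp [h]
  set c : Fin n → ℝ := fun i => z i ⬝ᵥ z i with hc
  have hcpos : ∀ i, 0 < c i := by
    intro i
    have h0 : 0 ≤ c i := by
      apply Finset.sum_nonneg; intro j _; exact mul_self_nonneg _
    rcases h0.lt_or_eq with h | h
    · exact h
    · exact absurd (dotProduct_self_eq_zero.mp h.symm) (hz i)
  have hD : Zbar * Zbarᵀ = Matrix.diagonal c := by
    ext i j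
    by_cases hij : i = j
    · subst hij
      simp only [Matrix.mul_apply, hZbar, Matrix.transpose_apply, Matrix.of_apply,
        Pi.smul_apply, smul_eq_mul, Matrix.diagonal_apply_eq]
      calc ∑ x, y i * z i x * (y i * z i x)
          = (y i * y i) * ∑ x, z i x * z i x := by rw [Finset.mul_sum]; congr 1; ext x; ring
        _ = c i := by rw [hy2]; simp [hc, dotProduct]
    · simp only [Matrix.mul_apply, hZbar, Matrix.transpose_apply, Matrix.of_apply,
        Pi.smul_apply, smul_eq_mul, Matrix.diagonal_apply_ne _ hij]
      calc ∑ x, y i * z i x * (y j * z j x)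
          = (y i * y j) * ∑ x, z i x * z j x := by rw [Finset.mul_sum]; congr 1; ext x; ring
        _ = 0 := by rw [show ∑ x, z i x * z j x = 0 from horth i j hij]; ring
  have hDinv : (Zbar * Zbarᵀ)⁻¹ = Matrix.diagonal (fun i => (c i)⁻¹) := by
    rw [hD]
    apply Matrix.inv_eq_right_inv
    rw [Matrix.diagonal_mul_diagonal]
    ext i j
    by_cases hij : i = j
    · subst hij
      simp [Matrix.diagonal_apply_eq, mul_inv_cancel₀ (hcpos i).ne']
    · simp [Matrix.diagonal_apply_ne _ hij, Matrix.one_apply_ne hij]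
  have hv : (Zbar * Zbarᵀ)⁻¹ *ᵥ one = fun i => (c i)⁻¹ := by
    ext i; rw [hDinv, Matrix.mulVec_diagonal, hone]; simp
  set S : ℝ := ∑ i, (c i)⁻¹ with hS
  have hSpos : 0 < S := by
    have : Nonempty (Fin n) := ⟨k⟩
    exact Finset.sum_pos (fun i _ => inv_pos.mpr (hcpos i)) Finset.univ_nonempty
  have hden : one ⬝ᵥ ((Zbar * Zbarᵀ)⁻¹ *ᵥ one) = S := by
    rw [hv, hone]; simp [dotProduct, hS]
  have hu : Zbarᵀ *ᵥ ((Zbar * Zbarᵀ)⁻¹ *ᵥ one) = fun j => ∑ i, y i * z i j * (c i)⁻¹ := by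
    ext j
    rw [hv]
    simp only [Matrix.mulVec, dotProduct, Matrix.transpose_apply, hZbar, Matrix.of_apply,
      Pi.smul_apply, smul_eq_mul]
  have hzperp' : zperp = fun j => S⁻¹ * ∑ i, y i * z i j * (c i)⁻¹ := by
    rw [hzperp, hden, hu]; rfl
  have key : ∀ w : Fin p → ℝ, zperp ⬝ᵥ w = S⁻¹ * ∑ i, y i * (c i)⁻¹ * (z i ⬝ᵥ w) := by
    intro w
    rw [hzperp']
    simp only [dotProduct]
    calc ∑ j, (S⁻¹ * ∑ i, y i * z i j * (c i)⁻¹) * w j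
        = ∑ j, ∑ i, S⁻¹ * (y i * (c i)⁻¹ * (z i j * w j)) := by
          apply Finset.sum_congr rfl; intro j _
          rw [Finset.mul_sum, Finset.sum_mul]
          apply Finset.sum_congr rfl; intro i _; ring
      _ = ∑ i, ∑ j, S⁻¹ * (y i * (c i)⁻¹ * (z i j * w j)) := Finset.sum_comm
      _ = ∑ i, S⁻¹ * (y i * (c i)⁻¹ * (z i ⬝ᵥ w)) := by
          apply Finset.sum_congr rfl; intro i _
          rw [← Finset.mul_sum, ← Finset.mul_sum]; rfl
      _ = S⁻¹ * ∑ i, y i * (c i)⁻¹ * (z i ⬝ᵥ w) := by rw [← Finset.mul_sum]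
  have hzμ : zperp ⬝ᵥ μ = 0 := by
    rw [key]; simp [hμorth]
  have hzz : ∀ i, zperp ⬝ᵥ z i = S⁻¹ * y i * (c i)⁻¹ * c i := by
    intro i
    rw [key]
    rw [Finset.sum_eq_single i]
    · ring
    · intro b _ hb; rw [horth b i hb]; ring
    · simp
  have hzzk : ∀ i, zperp ⬝ᵥ (y i • z i) = S⁻¹ := by
    intro i
    rw [dotProduct_smul, hzz i, smul_eq_mul]
    calc y i * (S⁻¹ * y i * (c i)⁻¹ * c i)
        = (y i * y i) * (S⁻¹ * ((c i)⁻¹ * c i)) := by ring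
      _ = S⁻¹ := by rw [hy2, inv_mul_cancel₀ (hcpos i).ne']; ring
  have hzperp2 : zperp ⬝ᵥ zperp = S⁻¹ := by
    rw [key]
    have hthis : ∀ i, z i ⬝ᵥ zperp = S⁻¹ * y i := by
      intro i
      rw [dotProduct_comm, hzz i]
      field_simp [(hcpos i).ne']
    calc S⁻¹ * ∑ i, y i * (c i)⁻¹ * (z i ⬝ᵥ zperp)
        = S⁻¹ * ∑ i, (y i * y i) * ((c i)⁻¹ * S⁻¹) := by
          congr 1; apply Finset.sum_congr rfl; intro i _; rw [hthis i]; ring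
      _ = S⁻¹ * ∑ i, (c i)⁻¹ * S⁻¹ := by simp only [hy2, one_mul]
      _ = S⁻¹ * (S * S⁻¹) := by rw [← Finset.sum_mul, ← hS]
      _ = S⁻¹ := by rw [mul_inv_cancel₀ hSpos.ne']; ring
  have hμzk : μ ⬝ᵥ (y k • z k) = 0 := by
    rw [dotProduct_smul, dotProduct_comm, hμorth k]; simp
  have hμμ : 0 ≤ μ ⬝ᵥ μ := Finset.sum_nonneg fun j _ => mul_self_nonneg _
  have htot : μ ⬝ᵥ μ + S⁻¹ ≠ 0 := by positivity
  rw [hwbar, smul_dotProduct, dotProduct_add, add_dotProduct, add_dotProduct,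
    hμzk, hzμ, hzzk k, hzperp2, smul_eq_mul]
  field_simp
  ring
end

section
/- Suppose $A = ZZ^\top$ is invertible, and with the scalars $s = \boldsymbol{y}^\top A^{-1}\boldsymbol{y}$, $t = \boldsymbol{\nu}^\top A^{-1}\boldsymbol{\nu}$, $h = \boldsymbol{y}^\top A^{-1}\boldsymbol{\nu}$ for $\boldsymbol{\nu} = Z\boldsymbol{\mu}$, set $d = s(\|\boldsymbol{\mu}\|^2 - t) + (1+h)^2$. If $d \ne 0$ then $XX^\top$ is invertible with $(XX^\top)^{-1} = A^{-1} - d^{-1}A^{-1}\left[(1+h)(\boldsymbol{y}\boldsymbol{\nu}^\top + \boldsymbol{\nu}\boldsymbol{y}^\top) - s\,\boldsymbol{\nu}\boldsymbol{\nu}^\top + (\|\boldsymbol{\mu}\|^2 - t)\,\boldsymbol{y}\boldsymbol{y}^\top\right]A^{-1}$, where $X = Z + \boldsymbol{y}\boldsymbol{\mu}^\top$. -/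
open Matrix

section Helpers

variable {n p : ℕ}

lemma vmv_mul (a : Fin n → ℝ) (b : Fin n → ℝ) (M : Matrix (Fin n) (Fin n) ℝ) :
    vecMulVec a b * M = vecMulVec a (b ᵥ* M) := by
  ext i j
  simp [vecMulVec_apply, Matrix.mul_apply, Matrix.vecMul, dotProduct,
    Finset.mul_sum, mul_assoc]

lemma mul_vmv (M : Matrix (Fin n) (Fin n) ℝ) (a : Fin n → ℝ) (b : Fin n → ℝ) :
    M * vecMulVec a b = vecMulVec (M *ᵥ a) b := by
  ext i j
  simp [vecMulVec_apply, Matrix.mul_apply, Matrix.mulVec, dotProduct,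
    Finset.sum_mul, mul_assoc]

lemma mulp_vmv (M : Matrix (Fin n) (Fin p) ℝ) (a : Fin p → ℝ) (b : Fin n → ℝ) :
    M * vecMulVec a b = vecMulVec (M *ᵥ a) b := by
  ext i j
  simp [vecMulVec_apply, Matrix.mul_apply, Matrix.mulVec, dotProduct,
    Finset.sum_mul, mul_assoc]

lemma vmv_mulp (a : Fin n → ℝ) (b : Fin p → ℝ) (M : Matrix (Fin p) (Fin n) ℝ) :
    vecMulVec a b * M = vecMulVec a (b ᵥ* M) := by
  ext i j
  simp [vecMulVec_apply, Matrix.mul_apply, Matrix.vecMul, dotProduct,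
    Finset.mul_sum, mul_assoc]

lemma vmv_mul_vmv (a b c e : Fin n → ℝ) :
    vecMulVec a b * vecMulVec c e = (b ⬝ᵥ c) • vecMulVec a e := by
  ext i j
  simp [vecMulVec_apply, Matrix.mul_apply, dotProduct, Finset.sum_mul,
    Finset.mul_sum]
  apply Finset.sum_congr rfl
  intro k _
  ring

lemma vmvp_mul_vmv (a : Fin n → ℝ) (b : Fin p → ℝ) (c : Fin p → ℝ)
    (e : Fin n → ℝ) :
    vecMulVec a b * vecMulVec c e = (b ⬝ᵥ c) • vecMulVec a e := by
  ext i j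
  simp [vecMulVec_apply, Matrix.mul_apply, dotProduct, Finset.sum_mul,
    Finset.mul_sum]
  apply Finset.sum_congr rfl
  intro k _
  ring

lemma vmv_mul_mul_vmv (a b c e : Fin n → ℝ) (M : Matrix (Fin n) (Fin n) ℝ) :
    vecMulVec a b * M * vecMulVec c e = (b ⬝ᵥ (M *ᵥ c)) • vecMulVec a e := by
  rw [vmv_mul, vmv_mul_vmv, Matrix.dotProduct_mulVec]

lemma vmv_transpose (a : Fin n → ℝ) (b : Fin p → ℝ) :
    (vecMulVec a b)ᵀ = vecMulVec b a := by
  ext i j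
  simp [vecMulVec_apply, mul_comm]

end Helpers

/-- Explicit inverse of the Gram matrix `XXᵀ` for `X = Z + y μᵀ`, via the
Woodbury identity. -/
theorem stmt19 {n p : ℕ} (Z : Matrix (Fin n) (Fin p) ℝ)
    (y : Fin n → ℝ) (μ : Fin p → ℝ)
    (A : Matrix (Fin n) (Fin n) ℝ) (hAdef : A = Z * Zᵀ)
    (hAunit : IsUnit A.det)
    (ν : Fin n → ℝ) (hν : ν = Z *ᵥ μ)
    (s t h d : ℝ)
    (hs : s = y ⬝ᵥ (A⁻¹ *ᵥ y))
    (ht : t = ν ⬝ᵥ (A⁻¹ *ᵥ ν))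
    (hh : h = y ⬝ᵥ (A⁻¹ *ᵥ ν))
    (hd : d = s * (μ ⬝ᵥ μ - t) + (1 + h)^2)
    (hd0 : d ≠ 0)
    (X : Matrix (Fin n) (Fin p) ℝ) (hX : X = Z + vecMulVec y μ) :
    IsUnit (X * Xᵀ).det ∧
      (X * Xᵀ)⁻¹
        = A⁻¹ - d⁻¹ •
            (A⁻¹ * ((1 + h) • (vecMulVec y ν + vecMulVec ν y)
              - s • vecMulVec ν ν + (μ ⬝ᵥ μ - t) • vecMulVec y y) * A⁻¹) := by
  have hAE : A * A⁻¹ = 1 := Matrix.mul_nonsing_inv A hAunit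
  -- symmetry of A and E
  have hAsymm : Aᵀ = A := by rw [hAdef, transpose_mul, transpose_transpose]
  have hEsymm : A⁻¹ᵀ = A⁻¹ := by
    rw [Matrix.transpose_nonsing_inv, hAsymm]
  -- symmetric scalar
  have hh' : ν ⬝ᵥ (A⁻¹ *ᵥ y) = h := by
    rw [hh, Matrix.dotProduct_mulVec, ← Matrix.mulVec_transpose, hEsymm,
      dotProduct_comm, Matrix.dotProduct_mulVec, ← Matrix.mulVec_transpose,
      hEsymm]
  obtain ⟨E, hE⟩ : ∃ E, A⁻¹ = E := ⟨_, rfl⟩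
  rw [hE] at hAE hEsymm hh' hs ht hh ⊢
  obtain ⟨P, hP⟩ : ∃ P : Matrix (Fin n) (Fin n) ℝ,
      vecMulVec y ν + vecMulVec ν y + (μ ⬝ᵥ μ) • vecMulVec y y = P := ⟨_, rfl⟩
  obtain ⟨C, hC⟩ : ∃ C : Matrix (Fin n) (Fin n) ℝ,
      (1 + h) • (vecMulVec y ν + vecMulVec ν y)
        - s • vecMulVec ν ν + (μ ⬝ᵥ μ - t) • vecMulVec y y = C := ⟨_, rfl⟩
  rw [hC]
  -- X Xᵀ = A + P
  have hM : X * Xᵀ = A + P := by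
    rw [hX, transpose_add, vmv_transpose, Matrix.add_mul, Matrix.mul_add,
      Matrix.mul_add, ← hAdef, mulp_vmv, ← hν, vmv_mulp, vecMul_transpose,
      ← hν, vmvp_mul_vmv, ← hP]
    abel
  -- key algebraic identity
  have key : d • P = C + P * E * C := by
    rw [← hP, ← hC]
    simp only [add_mul, mul_add, sub_mul, mul_sub, smul_mul_assoc,
      mul_smul_comm, vmv_mul_mul_vmv, ← hs, ← ht, ← hh, hh']
    rw [hd]
    module
  have hMB : (X * Xᵀ) * (E - d⁻¹ • (E * C * E)) = 1 := by
    rw [hM, Matrix.mul_sub, Matrix.add_mul, hAE, mul_smul_comm,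
      Matrix.add_mul]
    have h1 : A * (E * C * E) = C * E := by
      rw [← mul_assoc, ← mul_assoc, hAE, one_mul]
    have h2 : P * (E * C * E) = (P * E * C) * E := by
      rw [← mul_assoc, ← mul_assoc]
    rw [h1, h2]
    have h3 : C * E + P * E * C * E = d • (P * E) := by
      rw [← add_mul, ← key, smul_mul_assoc]
    rw [h3, smul_smul, inv_mul_cancel₀ hd0, one_smul]
    abel
  exact ⟨Matrix.isUnit_det_of_right_inverse hMB,
    Matrix.inv_eq_right_inv hMB⟩
end
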